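/- Let G be a locally finite connected weighted graph, x₀ ∈ X, ρ(x) = d(x,x₀) the combinatorial distance, and κ(r) = min_{y ∈ S_r} max_{x ∈ S_{r−1}, x ∼ y} κ(x,y) the sphere curvature (κ(0) = 0). Then for all x ∈ X: ℒρ(x) ≥ ∑_{j=1}^{ρ(x)} κ(j) − Deg(x₀). -/

import Mathlib

noncomputable def lap {X : Type*} (b : X → X → ℝ) (m : X → ℝ) (f : X → ℝ) (x : X) : ℝ :=
  (1 / m x) * ∑' y, b x y * (f x - f y)

noncomputable def deg {X : Type*} (b : X → X → ℝ) (m : X → ℝ) (x : X) : ℝ :=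
  (1 / m x) * ∑' y, b x y

def HasPathLen {X : Type*} (b : X → X → ℝ) (x y : X) (n : ℕ) : Prop :=
  ∃ p : ℕ → X, p 0 = x ∧ p n = y ∧ ∀ i < n, 0 < b (p i) (p (i + 1))

noncomputable def cdist {X : Type*} (b : X → X → ℝ) (x y : X) : ℕ :=
  sInf {n | HasPathLen b x y n}

def Lip1 {X : Type*} (b : X → X → ℝ) (f : X → ℝ) : Prop :=
  ∀ x y, |f x - f y| ≤ (cdist b x y : ℝ)

/-- Ollivier Ricci curvature via the dual formula. -/
noncomputable def kappa {X : Type*} (b : X → X → ℝ) (m : X → ℝ) (x y : X) : ℝ :=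
  sInf {t : ℝ | ∃ f : X → ℝ, Lip1 b f ∧ (f x - f y) / (cdist b x y : ℝ) = 1 ∧
    t = (lap b m f x - lap b m f y) / (cdist b x y : ℝ)}

/-- The sphere curvature `κ(r) = min_{y ∈ S_r} max_{x ∈ S_{r−1}, x∼y} κ(x,y)`, with
`κ(0) = 0`. -/
noncomputable def sphereCurv {X : Type*} (b : X → X → ℝ) (m : X → ℝ) (x₀ : X) (r : ℕ) : ℝ :=
  if r = 0 then 0 else
    sInf {t : ℝ | ∃ y, cdist b x₀ y = r ∧
      t = sSup {s : ℝ | ∃ x, cdist b x₀ x = r - 1 ∧ 0 < b x y ∧ s = kappa b m x y}}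

section AuxLemmas

variable {X : Type*} {b : X → X → ℝ} {m : X → ℝ}

lemma hasPathLen_refl (b : X → X → ℝ) (x : X) : HasPathLen b x x 0 :=
  ⟨fun _ => x, rfl, rfl, fun i hi => absurd hi (Nat.not_lt_zero i)⟩

lemma hasPathLen_trans {x y z : X} {n k : ℕ} (h1 : HasPathLen b x y n)
    (h2 : HasPathLen b y z k) : HasPathLen b x z (n + k) := by
  obtain ⟨p, hp0, hpn, hp⟩ := h1
  obtain ⟨q, hq0, hqk, hq⟩ := h2
  refine ⟨fun i => if i < n then p i else q (i - n), ?_, ?_, ?_⟩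
  · rcases Nat.eq_zero_or_pos n with h | h
    · subst h; simpa [hq0, ← hpn] using hp0
    · simp [h, hp0]
  · simp only [Nat.add_sub_cancel_left]
    rw [if_neg (by omega)]
    simpa using hqk
  · intro i hi
    rcases lt_or_ge i n with h | h
    · rcases Nat.lt_or_ge (i+1) n with h' | h'
      · simpa [h, h'] using hp i h
      · have : i + 1 = n := by omega
        have : q (i + 1 - n) = p (i + 1) := by
          rw [this]; simp [hq0, ← hpn]
        simp only [if_pos h, if_neg (by omega : ¬ i + 1 < n), this]
        exact hp i h
    · have h1' : ¬ i < n := by omega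
      have h2' : ¬ i + 1 < n := by omega
      simp only [if_neg h1', if_neg h2']
      have : i + 1 - n = (i - n) + 1 := by omega
      rw [this]
      exact hq (i - n) (by omega)

lemma hasPathLen_symm (hb_symm : ∀ x y, b x y = b y x) {x y : X} {n : ℕ}
    (h : HasPathLen b x y n) : HasPathLen b y x n := by
  obtain ⟨p, hp0, hpn, hp⟩ := h
  refine ⟨fun i => p (n - i), by simpa, by simpa, fun i hi => ?_⟩
  simp only []
  have h1 : n - i = (n - (i+1)) + 1 := by omega
  rw [hb_symm, h1]
  exact hp _ (by omega)

lemma exists_path_cdist (hconn : ∀ x y : X, ∃ n, HasPathLen b x y n) (x y : X) :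
    HasPathLen b x y (cdist b x y) :=
  Nat.sInf_mem (hconn x y)

lemma cdist_le {x y : X} {n : ℕ} (h : HasPathLen b x y n) : cdist b x y ≤ n :=
  Nat.sInf_le h

lemma cdist_self (b : X → X → ℝ) (x : X) : cdist b x x = 0 :=
  Nat.le_zero.mp (cdist_le (hasPathLen_refl b x))

lemma cdist_triangle (hconn : ∀ x y : X, ∃ n, HasPathLen b x y n) (x y z : X) :
    cdist b x z ≤ cdist b x y + cdist b y z :=
  cdist_le (hasPathLen_trans (exists_path_cdist hconn x y) (exists_path_cdist hconn y z))

lemma cdist_symm (hb_symm : ∀ x y, b x y = b y x)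
    (hconn : ∀ x y : X, ∃ n, HasPathLen b x y n) (x y : X) :
    cdist b x y = cdist b y x :=
  le_antisymm (cdist_le (hasPathLen_symm hb_symm (exists_path_cdist hconn y x)))
    (cdist_le (hasPathLen_symm hb_symm (exists_path_cdist hconn x y)))

lemma eq_of_cdist_eq_zero (hconn : ∀ x y : X, ∃ n, HasPathLen b x y n) {x y : X}
    (h : cdist b x y = 0) : x = y := by
  have := exists_path_cdist hconn x y
  rw [h] at this
  obtain ⟨p, hp0, hpn, -⟩ := this
  rw [← hp0, hpn]

lemma cdist_le_one_of_adj {x y : X} (h : 0 < b x y) : cdist b x y ≤ 1 := by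
  refine cdist_le ⟨fun i => if i = 0 then x else y, by simp, by simp, fun i hi => ?_⟩
  have : i = 0 := by omega
  simpa [this] using h

lemma cdist_eq_one (hconn : ∀ x y : X, ∃ n, HasPathLen b x y n) {x y : X}
    (hadj : 0 < b x y) (hne : x ≠ y) : cdist b x y = 1 := by
  have h1 := cdist_le_one_of_adj hadj
  have h2 : cdist b x y ≠ 0 := fun h => hne (eq_of_cdist_eq_zero hconn h)
  omega

lemma rho_lip (hb_symm : ∀ x y, b x y = b y x)
    (hconn : ∀ x y : X, ∃ n, HasPathLen b x y n) (x₀ : X) :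
    Lip1 b (fun z => (cdist b x₀ z : ℝ)) := by
  intro a c
  have h1 : cdist b x₀ a ≤ cdist b x₀ c + cdist b a c := by
    rw [cdist_symm hb_symm hconn a c]
    exact cdist_triangle hconn x₀ c a
  have h2 : cdist b x₀ c ≤ cdist b x₀ a + cdist b a c := cdist_triangle hconn x₀ a c
  rw [abs_sub_le_iff]
  constructor
  · have : (cdist b x₀ a : ℝ) ≤ (cdist b x₀ c : ℝ) + (cdist b a c : ℝ) := by exact_mod_cast h1
    linarith
  · have : (cdist b x₀ c : ℝ) ≤ (cdist b x₀ a : ℝ) + (cdist b a c : ℝ) := by exact_mod_cast h2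
    linarith

lemma lip1_neg {f : X → ℝ} (hf : Lip1 b f) : Lip1 b (fun z => -f z) := by
  intro a c
  have := hf a c
  simp only []
  rw [show -f a - -f c = -(f a - f c) by ring, abs_neg]
  exact this

lemma tsum_eq_nbr_sum (hb_nonneg : ∀ x y, 0 ≤ b x y) (hloc : ∀ x : X, {y | 0 < b x y}.Finite)
    (g : X → ℝ) (x : X) :
    ∑' y, b x y * g y = ∑ y ∈ (hloc x).toFinset, b x y * g y := by
  refine tsum_eq_sum fun y hy => ?_
  have : ¬ 0 < b x y := by simpa using hy
  have : b x y = 0 := le_antisymm (not_lt.mp this) (hb_nonneg x y)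
  simp [this]

lemma lap_eq_sum (hb_nonneg : ∀ x y, 0 ≤ b x y) (hloc : ∀ x : X, {y | 0 < b x y}.Finite)
    (f : X → ℝ) (x : X) :
    lap b m f x = (1 / m x) * ∑ y ∈ (hloc x).toFinset, b x y * (f x - f y) := by
  rw [lap, tsum_eq_nbr_sum hb_nonneg hloc (fun y => f x - f y) x]

lemma deg_eq_sum (hb_nonneg : ∀ x y, 0 ≤ b x y) (hloc : ∀ x : X, {y | 0 < b x y}.Finite)
    (x : X) :
    deg b m x = (1 / m x) * ∑ y ∈ (hloc x).toFinset, b x y := by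
  rw [deg]
  congr 1
  simpa using tsum_eq_nbr_sum hb_nonneg hloc (fun _ => (1:ℝ)) x

lemma lap_neg (f : X → ℝ) (x : X) :
    lap b m (fun z => -f z) x = -lap b m f x := by
  simp only [lap]
  rw [show (fun y => b x y * (-f x - -f y)) = fun y => -(b x y * (f x - f y)) by
    funext y; ring]
  rw [tsum_neg]
  ring

lemma lap_abs_le (hb_nonneg : ∀ x y, 0 ≤ b x y) (hloc : ∀ x : X, {y | 0 < b x y}.Finite)
    (hm : ∀ x, 0 < m x) {f : X → ℝ} (hf : Lip1 b f) (x : X) :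
    |lap b m f x| ≤ deg b m x := by
  rw [lap_eq_sum hb_nonneg hloc, deg_eq_sum hb_nonneg hloc, abs_mul,
    abs_of_pos (one_div_pos.mpr (hm x))]
  refine mul_le_mul_of_nonneg_left ?_ (le_of_lt (one_div_pos.mpr (hm x)))
  refine le_trans (Finset.abs_sum_le_sum_abs _ _) (Finset.sum_le_sum fun y hy => ?_)
  have hby : 0 < b x y := by simpa using hy
  rw [abs_mul, abs_of_pos hby]
  have h1 : |f x - f y| ≤ 1 := by
    refine le_trans (hf x y) ?_
    exact_mod_cast Nat.cast_le.mpr (cdist_le_one_of_adj hby)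
  calc b x y * |f x - f y| ≤ b x y * 1 := by
        exact mul_le_mul_of_nonneg_left h1 (le_of_lt hby)
    _ = b x y := mul_one _

lemma kappa_le_lap_sub (hb_symm : ∀ x y, b x y = b y x) (hb_nonneg : ∀ x y, 0 ≤ b x y)
    (hloc : ∀ x : X, {y | 0 < b x y}.Finite)
    (hconn : ∀ x y : X, ∃ n, HasPathLen b x y n) (hm : ∀ x, 0 < m x)
    (x₀ : X) {x' y : X} (hadj : 0 < b x' y)
    (hd : cdist b x₀ x' + 1 = cdist b x₀ y) :
    kappa b m x' y ≤
      lap b m (fun z => (cdist b x₀ z : ℝ)) y - lap b m (fun z => (cdist b x₀ z : ℝ)) x' := by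
  have hne : x' ≠ y := fun h => by rw [h] at hd; omega
  have hd1 : cdist b x' y = 1 := cdist_eq_one hconn hadj hne
  set ρ : X → ℝ := fun z => (cdist b x₀ z : ℝ) with hρ
  have hlip : Lip1 b (fun z => -ρ z) := lip1_neg (rho_lip hb_symm hconn x₀)
  have hmem : (lap b m ρ y - lap b m ρ x') ∈
      {t : ℝ | ∃ f : X → ℝ, Lip1 b f ∧ (f x' - f y) / (cdist b x' y : ℝ) = 1 ∧
        t = (lap b m f x' - lap b m f y) / (cdist b x' y : ℝ)} := by
    refine ⟨fun z => -ρ z, hlip, ?_, ?_⟩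
    · rw [hd1]
      simp only [Nat.cast_one, div_one, hρ]
      have : (cdist b x₀ y : ℝ) = (cdist b x₀ x' : ℝ) + 1 := by exact_mod_cast hd.symm
      rw [this]; ring
    · rw [hd1, lap_neg, lap_neg]
      simp only [Nat.cast_one, div_one]
      ring
  have hbdd : BddBelow {t : ℝ | ∃ f : X → ℝ, Lip1 b f ∧ (f x' - f y) / (cdist b x' y : ℝ) = 1 ∧
      t = (lap b m f x' - lap b m f y) / (cdist b x' y : ℝ)} := by
    refine ⟨-(deg b m x' + deg b m y), fun t ht => ?_⟩
    obtain ⟨f, hf, -, hteq⟩ := ht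
    rw [hd1] at hteq
    simp only [Nat.cast_one, div_one] at hteq
    have h1 := abs_le.mp (lap_abs_le hb_nonneg hloc hm hf x')
    have h2 := abs_le.mp (lap_abs_le hb_nonneg hloc hm hf y)
    rw [hteq]
    linarith [h1.1, h1.2, h2.1, h2.2]
  exact csInf_le hbdd hmem

lemma ball_finite (hloc : ∀ x : X, {y | 0 < b x y}.Finite)
    (hconn : ∀ x y : X, ∃ n, HasPathLen b x y n) (x₀ : X) :
    ∀ r : ℕ, {x : X | cdist b x₀ x ≤ r}.Finite := by
  intro r
  induction r with
  | zero =>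
    refine Set.Finite.subset (Set.finite_singleton x₀) fun x hx => ?_
    have : cdist b x₀ x = 0 := Nat.le_zero.mp hx
    exact (eq_of_cdist_eq_zero hconn this).symm
  | succ r ih =>
    refine Set.Finite.subset (ih.union (ih.biUnion fun y _ => hloc y)) fun x hx => ?_
    simp only [Set.mem_setOf_eq] at hx
    rcases Nat.lt_or_ge (cdist b x₀ x) (r+1) with h | h
    · exact Or.inl (by simpa using Nat.lt_succ_iff.mp h)
    · have hx' : cdist b x₀ x = r + 1 := by omega
      obtain ⟨p, hp0, hpn, hp⟩ := exists_path_cdist hconn x₀ x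
      rw [hx'] at hpn hp
      right
      have h1 : p r ∈ {x : X | cdist b x₀ x ≤ r} :=
        cdist_le ⟨p, hp0, rfl, fun i hi => hp i (by omega)⟩
      have h2 : x ∈ {y | 0 < b (p r) y} := by
        have := hp r (by omega)
        rwa [hpn] at this
      exact Set.mem_biUnion h1 h2

end AuxLemmas

/-- Laplacian comparison: `ℒρ(x) ≥ ∑_{j=1}^{ρ(x)} κ(j) − Deg(x₀)` where `ρ = d(·,x₀)`. -/
theorem laplacian_comparison {X : Type*} (b : X → X → ℝ) (m : X → ℝ)
    (hb_symm : ∀ x y, b x y = b y x) (hb_nonneg : ∀ x y, 0 ≤ b x y)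
    (hb_diag : ∀ x, b x x = 0) (hb_sum : ∀ x, Summable fun y => b x y)
    (hm : ∀ x, 0 < m x)
    (hloc : ∀ x : X, {y | 0 < b x y}.Finite)
    (hconn : ∀ x y : X, ∃ n, HasPathLen b x y n)
    (x₀ : X) :
    ∀ x : X,
      (∑ j ∈ Finset.Icc 1 (cdist b x₀ x), sphereCurv b m x₀ j) - deg b m x₀ ≤
        lap b m (fun z => (cdist b x₀ z : ℝ)) x := by
  intro x
  suffices h : ∀ r : ℕ, ∀ x : X, cdist b x₀ x = r →
      (∑ j ∈ Finset.Icc 1 r, sphereCurv b m x₀ j) - deg b m x₀ ≤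
        lap b m (fun z => (cdist b x₀ z : ℝ)) x from h (cdist b x₀ x) x rfl
  intro r
  induction r with
  | zero =>
    intro x hx
    have hx0 : x₀ = x := eq_of_cdist_eq_zero hconn hx
    subst hx0
    rw [Finset.Icc_eq_empty (by omega), Finset.sum_empty, zero_sub,
      lap_eq_sum hb_nonneg hloc, deg_eq_sum hb_nonneg hloc, ← mul_neg, ← Finset.sum_neg_distrib]
    refine mul_le_mul_of_nonneg_left (Finset.sum_le_sum fun y hy => ?_)
      (le_of_lt (one_div_pos.mpr (hm x₀)))
    have hby : 0 < b x₀ y := by simpa using hy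
    have hρ0 : ((cdist b x₀ x₀ : ℕ) : ℝ) = 0 := by rw [cdist_self]; simp
    have hρy : ((cdist b x₀ y : ℕ) : ℝ) ≤ 1 := by
      exact_mod_cast Nat.cast_le.mpr (cdist_le_one_of_adj hby)
    have hρynn : (0:ℝ) ≤ ((cdist b x₀ y : ℕ) : ℝ) := Nat.cast_nonneg _
    nlinarith [hby.le]
  | succ r ih =>
    intro x hx
    -- find a neighbor of x on the previous sphere
    obtain ⟨p, hp0, hpn, hp⟩ := exists_path_cdist hconn x₀ x
    rw [hx] at hpn hp
    have hadj : 0 < b (p r) x := by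
      have := hp r (by omega); rwa [hpn] at this
    have hprle : cdist b x₀ (p r) ≤ r :=
      cdist_le ⟨p, hp0, rfl, fun i hi => hp i (by omega)⟩
    have hprge : r ≤ cdist b x₀ (p r) := by
      have h1 : cdist b x₀ x ≤ cdist b x₀ (p r) + cdist b (p r) x :=
        cdist_triangle hconn x₀ (p r) x
      have h2 : cdist b (p r) x ≤ 1 := cdist_le_one_of_adj hadj
      omega
    have hpr : cdist b x₀ (p r) = r := le_antisymm hprle hprge
    -- the inner sup set for y := x
    set S : Set ℝ :=
      {s : ℝ | ∃ x', cdist b x₀ x' = (r + 1) - 1 ∧ 0 < b x' x ∧ s = kappa b m x' x} with hS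
    have hSne : S.Nonempty := ⟨kappa b m (p r) x, p r, by simpa using hpr, hadj, rfl⟩
    have hSfin : S.Finite := by
      refine Set.Finite.subset
        (((ball_finite hloc hconn x₀ r).image (fun x' => kappa b m x' x))) ?_
      rintro s ⟨x', hx', -, rfl⟩
      exact ⟨x', by simpa using Nat.le_of_eq hx', rfl⟩
    obtain ⟨x₁, hx₁r, hx₁adj, hx₁eq⟩ := hSne.csSup_mem hSfin
    have hx₁r' : cdist b x₀ x₁ = r := by simpa using hx₁r
    -- sphereCurv (r+1) ≤ sSup S
    have hsc : sphereCurv b m x₀ (r + 1) ≤ sSup S := by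
      rw [sphereCurv, if_neg (Nat.succ_ne_zero r)]
      set T : Set ℝ := {t : ℝ | ∃ y, cdist b x₀ y = r + 1 ∧
        t = sSup {s : ℝ | ∃ x', cdist b x₀ x' = (r + 1) - 1 ∧ 0 < b x' y ∧
          s = kappa b m x' y}} with hT
      have hTfin : T.Finite := by
        refine Set.Finite.subset (((ball_finite hloc hconn x₀ (r+1)).image
          (fun y => sSup {s : ℝ | ∃ x', cdist b x₀ x' = (r + 1) - 1 ∧ 0 < b x' y ∧
            s = kappa b m x' y}))) ?_
        rintro t ⟨y, hy, rfl⟩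
        exact ⟨y, Nat.le_of_eq hy, rfl⟩
      have hmem : sSup S ∈ T := ⟨x, hx, rfl⟩
      exact csInf_le hTfin.bddBelow hmem
    -- sSup S = kappa x₁ x ≤ lap ρ x - lap ρ x₁
    have hk : kappa b m x₁ x ≤
        lap b m (fun z => (cdist b x₀ z : ℝ)) x - lap b m (fun z => (cdist b x₀ z : ℝ)) x₁ :=
      kappa_le_lap_sub hb_symm hb_nonneg hloc hconn hm x₀ hx₁adj (by omega)
    have hih := ih x₁ hx₁r'
    rw [Finset.sum_Icc_succ_top (by omega : 1 ≤ r + 1)]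
    rw [← hx₁eq] at hk
    linarith
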